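/- If f : ℝⁿ → ℝ attains a local minimum at x* and f has an upper exhauster E* at x* in the sense of Dini (i.e., f'_D(x*,g) = min_{C ∈ E*} max_{v ∈ C} ⟨v,g⟩ for all g), then 0 ∈ C for every C ∈ E*. -/

import Mathlib

open Filter Topology Set

/-- Nonnegativity of the Dini derivative at a local minimum. -/
lemma phi_nonneg {n : ℕ} (f : EuclideanSpace ℝ (Fin n) → ℝ)
    (xs : EuclideanSpace ℝ (Fin n)) (φ : EuclideanSpace ℝ (Fin n) → ℝ)
    (hmin : IsLocalMin f xs)
    (hD : ∀ g : EuclideanSpace ℝ (Fin n),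
      Tendsto (fun α : ℝ => (f (xs + α • g) - f xs) / α) (𝓝[>] (0:ℝ)) (𝓝 (φ g)))
    (g : EuclideanSpace ℝ (Fin n)) : 0 ≤ φ g := by
  have hcont : Tendsto (fun α : ℝ => xs + α • g) (𝓝[>] (0:ℝ)) (𝓝 xs) := by
    have : Tendsto (fun α : ℝ => xs + α • g) (𝓝 (0:ℝ)) (𝓝 (xs + (0:ℝ) • g)) :=
      (continuous_const.add ((continuous_id).smul continuous_const)).tendsto 0
    simpa using this.mono_left nhdsWithin_le_nhds
  have hev : ∀ᶠ α in 𝓝[>] (0:ℝ), 0 ≤ (f (xs + α • g) - f xs) / α := by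
    filter_upwards [hcont.eventually hmin, self_mem_nhdsWithin] with α hα (hα' : 0 < α)
    exact div_nonneg (by linarith [hα]) hα'.le
  exact ge_of_tendsto (hD g) hev

/-- if `f` attains a local minimum at `x*` and has an upper exhauster (in the
sense of Dini) at `x*`, then every set of the exhauster contains the origin. -/
theorem local_min_upper_exhauster {n : ℕ} (f : EuclideanSpace ℝ (Fin n) → ℝ)
    (xs : EuclideanSpace ℝ (Fin n)) (φ : EuclideanSpace ℝ (Fin n) → ℝ)
    (Estar : Set (Set (EuclideanSpace ℝ (Fin n))))
    (hmin : IsLocalMin f xs)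
    (hD : ∀ g : EuclideanSpace ℝ (Fin n),
      Tendsto (fun α : ℝ => (f (xs + α • g) - f xs) / α) (𝓝[>] (0:ℝ)) (𝓝 (φ g)))
    (hne : Estar.Nonempty)
    (hsets : ∀ C ∈ Estar, C.Nonempty ∧ Convex ℝ C ∧ IsCompact C)
    (hrep : ∀ g : EuclideanSpace ℝ (Fin n),
      IsLeast ((fun C => sSup ((fun v => (inner ℝ v g : ℝ)) '' C)) '' Estar) (φ g)) :
    ∀ C ∈ Estar, (0 : EuclideanSpace ℝ (Fin n)) ∈ C := by
  intro C hC
  by_contra h0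
  obtain ⟨hCne, hconv, hcomp⟩ := hsets C hC
  obtain ⟨L, u, hLu, hu0⟩ :=
    geometric_hahn_banach_closed_point hconv hcomp.isClosed h0
  have hu0' : u < 0 := by simpa using hu0
  set g := (InnerProductSpace.toDual ℝ (EuclideanSpace ℝ (Fin n))).symm L with hg
  have hLg : ∀ v, L v = (inner ℝ v g : ℝ) := by
    intro v
    rw [real_inner_comm]
    simpa [hg] using
      (InnerProductSpace.toDual ℝ (EuclideanSpace ℝ (Fin n))).apply_symm_apply L v |>.symm
  have hsup : sSup ((fun v => (inner ℝ v g : ℝ)) '' C) ≤ u := by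
    apply csSup_le (hCne.image _)
    rintro y ⟨v, hv, rfl⟩
    show (inner ℝ v g : ℝ) ≤ u
    rw [← hLg]
    exact (hLu v hv).le
  have hφle : φ g ≤ sSup ((fun v => (inner ℝ v g : ℝ)) '' C) :=
    (hrep g).2 ⟨C, hC, rfl⟩
  have := phi_nonneg f xs φ hmin hD g
  linarith
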